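/- Let r₀ > 0, let n ≥ 1 be an integer, and let z ∈ ℂ with |z| < r₀. Then (r₀/(2π)) · ∫_0^{2π} log|z − r₀ e^{it}| · e^{int} dt = −(r₀^{1−n}/(2n)) · z^n. -/

import Mathlib

open Real Complex

section Aux
open MeasureTheory


lemma intExp (m : ℤ) : (∫ t in (0:ℝ)..(2*Real.pi), Complex.exp ((m:ℂ) * t * Complex.I))
    = if m = 0 then (2*Real.pi : ℂ) else 0 := by
  rcases eq_or_ne m 0 with rfl | hm
  · simp
  · rw [if_neg hm]
    have h : ∀ t : ℝ, (m:ℂ) * t * Complex.I = ((m:ℂ)*Complex.I) * t := fun t => by ring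
    simp_rw [h]
    rw [integral_exp_mul_complex (by simp [hm, Complex.I_ne_zero])]
    have h1 : Complex.exp ((m:ℂ)*Complex.I * (2*Real.pi)) = 1 := by
      rw [show ((m:ℂ)*Complex.I * (2*Real.pi)) = (m:ℤ) * (2*Real.pi*Complex.I) by ring]
      exact Complex.exp_int_mul_two_pi_mul_I m
    simp [h1]

noncomputable def Fker (w : ℂ) (n k : ℕ) (t : ℝ) : ℂ :=
  -(w^k / (2*k)) * Complex.exp ((((n:ℤ) - (k:ℤ) : ℤ):ℂ) * t * Complex.I)
  - ((starRingEnd ℂ w)^k / (2*k)) * Complex.exp ((((n:ℤ) + (k:ℤ) : ℤ):ℂ) * t * Complex.I)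

lemma cont_Fker (w : ℂ) (n k : ℕ) : Continuous (Fker w n k) := by
  unfold Fker; fun_prop

lemma norm_Fker_le (w : ℂ) (n k : ℕ) (t : ℝ) : ‖Fker w n k t‖ ≤ 2 * ‖w‖^k := by
  rcases Nat.eq_zero_or_pos k with rfl | hk
  · simp [Fker]
  · have hk1 : (1:ℝ) ≤ (k:ℝ) := by exact_mod_cast hk
    have he : ∀ m : ℤ, ‖Complex.exp ((m:ℂ) * t * Complex.I)‖ = 1 := by
      intro m
      rw [show (m:ℂ) * t * Complex.I = ((m*t:ℝ):ℂ) * Complex.I by push_cast; ring]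
      simp [Complex.norm_exp]
    have h1 : ‖w^k / (2*(k:ℂ))‖ ≤ ‖w‖^k := by
      rw [norm_div, norm_pow]
      have : (1:ℝ) ≤ ‖(2:ℂ)*(k:ℂ)‖ := by
        rw [norm_mul]
        simp only [Complex.norm_natCast, Complex.norm_ofNat]
        nlinarith
      calc ‖w‖^k / ‖(2:ℂ)*(k:ℂ)‖ ≤ ‖w‖^k / 1 := by
            apply div_le_div_of_nonneg_left (by positivity) one_pos this
        _ = ‖w‖^k := div_one _
    have h2 : ‖(starRingEnd ℂ w)^k / (2*(k:ℂ))‖ ≤ ‖w‖^k := by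
      have : ‖(starRingEnd ℂ w)^k‖ = ‖w^k‖ := by
        simp [norm_pow]
      calc ‖(starRingEnd ℂ w)^k / (2*(k:ℂ))‖ = ‖w^k / (2*(k:ℂ))‖ := by
            rw [norm_div, norm_div, this]
        _ ≤ ‖w‖^k := h1
    calc ‖Fker w n k t‖ ≤ ‖-(w^k / (2*(k:ℂ))) * Complex.exp ((((n:ℤ) - (k:ℤ) : ℤ):ℂ) * t * Complex.I)‖
          + ‖((starRingEnd ℂ w)^k / (2*(k:ℂ))) * Complex.exp ((((n:ℤ) + (k:ℤ) : ℤ):ℂ) * t * Complex.I)‖ := by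
          unfold Fker; push_cast; exact norm_sub_le _ _
      _ ≤ 2 * ‖w‖^k := by
          rw [norm_mul, norm_mul, norm_neg, he, he, mul_one, mul_one]
          linarith

lemma hasSum_Fker (w : ℂ) (hw : ‖w‖ < 1) (n : ℕ) (t : ℝ) :
    HasSum (fun k => Fker w n k t)
      ((Real.log ‖1 - w * Complex.exp (-(t:ℂ) * Complex.I)‖ : ℂ)
        * Complex.exp ((n:ℂ) * t * Complex.I)) := by
  set ζ := w * Complex.exp (-(t:ℂ) * Complex.I) with hζdef
  have hζ : ‖ζ‖ < 1 := by
    rw [hζdef, norm_mul, show -(t:ℂ) * Complex.I = ((-t:ℝ):ℂ) * Complex.I by push_cast; ring]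
    simpa [Complex.norm_exp] using hw
  have h1 : HasSum (fun k : ℕ => ζ^k/k) (-(Complex.log (1-ζ))) :=
    Complex.hasSum_taylorSeries_neg_log hζ
  have h2 : HasSum (fun k : ℕ => (starRingEnd ℂ) (ζ^k/k)) ((starRingEnd ℂ) (-(Complex.log (1-ζ)))) :=
    h1.map (starRingEnd ℂ) Complex.continuous_conj
  have h3 := (((h1.add h2).div_const 2).neg).mul_right (Complex.exp ((n:ℂ) * t * Complex.I))
  have hval : -((-(Complex.log (1-ζ)) + (starRingEnd ℂ) (-(Complex.log (1-ζ)))) / 2)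
      * Complex.exp ((n:ℂ) * t * Complex.I)
      = (Real.log ‖1 - ζ‖ : ℂ) * Complex.exp ((n:ℂ) * t * Complex.I) := by
    rw [map_neg]
    have := Complex.add_conj (Complex.log (1-ζ))
    rw [show -((-(Complex.log (1-ζ)) + -((starRingEnd ℂ) (Complex.log (1-ζ)))) / 2)
        = (Complex.log (1-ζ) + (starRingEnd ℂ) (Complex.log (1-ζ))) / 2 by ring, this]
    rw [Complex.log_re]
    push_cast
    ring
  rw [← hval]
  apply h3.congr_fun
  intro k
  have hζk : ζ^k = w^k * Complex.exp (-(k:ℂ) * t * Complex.I) := by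
    rw [hζdef, mul_pow, ← Complex.exp_nat_mul]
    ring_nf
  have hζck : (starRingEnd ℂ) (ζ^k/k) = (starRingEnd ℂ w)^k * Complex.exp ((k:ℂ) * t * Complex.I) / k := by
    rw [map_div₀, map_pow, hζdef, map_mul, ← Complex.exp_conj]
    simp only [map_mul, map_neg, Complex.conj_ofReal, Complex.conj_I, Complex.conj_natCast]
    rw [mul_pow, ← Complex.exp_nat_mul]
    ring_nf
  rw [hζck, hζk]
  unfold Fker
  rw [show (((n:ℤ) - (k:ℤ) : ℤ):ℂ) * t * Complex.I
      = (-(k:ℂ) * t * Complex.I) + ((n:ℂ) * t * Complex.I) by push_cast; ring,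
    show (((n:ℤ) + (k:ℤ) : ℤ):ℂ) * t * Complex.I
      = ((k:ℂ) * t * Complex.I) + ((n:ℂ) * t * Complex.I) by push_cast; ring,
    Complex.exp_add, Complex.exp_add]
  ring

lemma integral_Fker (w : ℂ) (n : ℕ) (hn : 1 ≤ n) (k : ℕ) :
    (∫ t in (0:ℝ)..(2*Real.pi), Fker w n k t)
      = if k = n then -(Real.pi : ℂ) * w^n / n else 0 := by
  have hi1 : IntervalIntegrable (fun t : ℝ => -(w^k / (2*(k:ℂ)))
      * Complex.exp ((((n:ℤ) - (k:ℤ) : ℤ):ℂ) * t * Complex.I)) volume 0 (2*Real.pi) := by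
    apply Continuous.intervalIntegrable; fun_prop
  have hi2 : IntervalIntegrable (fun t : ℝ => ((starRingEnd ℂ w)^k / (2*(k:ℂ)))
      * Complex.exp ((((n:ℤ) + (k:ℤ) : ℤ):ℂ) * t * Complex.I)) volume 0 (2*Real.pi) := by
    apply Continuous.intervalIntegrable; fun_prop
  unfold Fker
  rw [intervalIntegral.integral_sub hi1 hi2, intervalIntegral.integral_const_mul,
    intervalIntegral.integral_const_mul, intExp, intExp]
  rcases eq_or_ne k n with rfl | hk
  · rw [if_pos (by omega : (k:ℤ) - (k:ℤ) = 0), if_neg (by omega : (k:ℤ) + (k:ℤ) ≠ 0), if_pos rfl]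
    have hk0 : (k:ℂ) ≠ 0 := by exact_mod_cast (by omega : (k:ℕ) ≠ 0)
    field_simp
    ring
  · rw [if_neg (by omega : (n:ℤ) - (k:ℤ) ≠ 0), if_neg (by omega : (n:ℤ) + (k:ℤ) ≠ 0),
      if_neg hk]
    ring

lemma part2 (w : ℂ) (hw : ‖w‖ < 1) (n : ℕ) (hn : 1 ≤ n) :
    (∫ t in (0:ℝ)..(2*Real.pi),
        (Real.log ‖1 - w * Complex.exp (-(t:ℂ) * Complex.I)‖ : ℂ)
          * Complex.exp ((n:ℂ) * t * Complex.I))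
      = -(Real.pi : ℂ) * w^n / n := by
  have h2π : (0:ℝ) ≤ 2*Real.pi := by positivity
  rw [intervalIntegral.integral_of_le h2π]
  have hint : ∀ k : ℕ, Integrable (Fker w n k) (volume.restrict (Set.Ioc (0:ℝ) (2*Real.pi))) :=
    fun k => (cont_Fker w n k).integrableOn_Ioc
  have hbound : ∀ k : ℕ, (∫ t in Set.Ioc (0:ℝ) (2*Real.pi), ‖Fker w n k t‖) ≤ 2*Real.pi * (2*‖w‖^k) := by
    intro k
    calc (∫ t in Set.Ioc (0:ℝ) (2*Real.pi), ‖Fker w n k t‖)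
        ≤ ∫ _ in Set.Ioc (0:ℝ) (2*Real.pi), 2*‖w‖^k :=
          integral_mono (hint k).norm (integrable_const _) (fun t => norm_Fker_le w n k t)
      _ = 2*Real.pi * (2*‖w‖^k) := by
          rw [setIntegral_const, measureReal_def, Real.volume_Ioc]
          simp [ENNReal.toReal_ofReal h2π, Real.pi_pos.le]
  have hsumnorm : Summable fun k : ℕ => ∫ t in Set.Ioc (0:ℝ) (2*Real.pi), ‖Fker w n k t‖ := by
    apply Summable.of_nonneg_of_le (fun k => integral_nonneg fun t => norm_nonneg _) hbound
    exact ((summable_geometric_of_lt_one (norm_nonneg w) hw).mul_left 2).mul_left (2*Real.pi)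
  have key := integral_tsum_of_summable_integral_norm hint hsumnorm
  have hts : ∀ t : ℝ, (∑' k, Fker w n k t)
      = (Real.log ‖1 - w * Complex.exp (-(t:ℂ) * Complex.I)‖ : ℂ)
          * Complex.exp ((n:ℂ) * t * Complex.I) := fun t => (hasSum_Fker w hw n t).tsum_eq
  calc (∫ t in Set.Ioc (0:ℝ) (2*Real.pi),
          (Real.log ‖1 - w * Complex.exp (-(t:ℂ) * Complex.I)‖ : ℂ)
            * Complex.exp ((n:ℂ) * t * Complex.I))
      = ∫ t in Set.Ioc (0:ℝ) (2*Real.pi), ∑' k, Fker w n k t :=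
        integral_congr_ae (Filter.Eventually.of_forall fun t => (hts t).symm)
    _ = ∑' k, ∫ t in Set.Ioc (0:ℝ) (2*Real.pi), Fker w n k t := key.symm
    _ = ∫ t in Set.Ioc (0:ℝ) (2*Real.pi), Fker w n n t := by
        apply tsum_eq_single
        intro k hk
        rw [← intervalIntegral.integral_of_le h2π, integral_Fker w n hn k, if_neg hk]
    _ = -(Real.pi : ℂ) * w^n / n := by
        rw [← intervalIntegral.integral_of_le h2π, integral_Fker w n hn n, if_pos rfl]

/-- The single layer potential of the density `e^{inθ}` on the circle of radius `r₀`,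
evaluated at an interior point `z`:
`(r₀/(2π)) ∫₀^{2π} log|z − r₀ e^{it}| e^{int} dt = −(r₀^{1−n}/(2n)) zⁿ`. -/
theorem singleLayer_circle_interior (r₀ : ℝ) (hr₀ : 0 < r₀) (n : ℕ) (hn : 1 ≤ n)
    (z : ℂ) (hz : ‖z‖ < r₀) :
    ((r₀ : ℂ) / (2 * Real.pi)) *
        ∫ t in (0 : ℝ)..(2 * Real.pi),
          (Real.log ‖z - (r₀ : ℂ) * Complex.exp ((t : ℂ) * Complex.I)‖ : ℂ) *
            Complex.exp ((n : ℂ) * (t : ℂ) * Complex.I) =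
      -((r₀ : ℂ) ^ ((1 : ℤ) - (n : ℤ)) / (2 * (n : ℂ))) * z ^ n := by
  have hr0 : (r₀ : ℂ) ≠ 0 := by exact_mod_cast hr₀.ne'
  set w : ℂ := z / r₀ with hwdef
  have hw : ‖w‖ < 1 := by
    rw [hwdef, norm_div, div_lt_one (by simp [abs_of_pos hr₀, hr₀] : (0:ℝ) < ‖(r₀:ℂ)‖)]
    simpa [abs_of_pos hr₀] using hz
  have hlog : ∀ t : ℝ,
      (Real.log ‖z - (r₀ : ℂ) * Complex.exp ((t : ℂ) * Complex.I)‖ : ℂ)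
        = (Real.log r₀ : ℂ)
          + (Real.log ‖1 - w * Complex.exp (-(t:ℂ) * Complex.I)‖ : ℂ) := by
    intro t
    have he : Complex.exp ((t:ℂ) * Complex.I) * Complex.exp (-(t:ℂ) * Complex.I) = 1 := by
      rw [← Complex.exp_add]; ring_nf; exact Complex.exp_zero
    have hfact : z - (r₀ : ℂ) * Complex.exp ((t : ℂ) * Complex.I)
        = ((r₀ : ℂ) * Complex.exp ((t : ℂ) * Complex.I))
            * (w * Complex.exp (-(t:ℂ) * Complex.I) - 1) := by
      rw [mul_sub, mul_one, hwdef]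
      rw [show (r₀:ℂ) * Complex.exp ((t:ℂ)*Complex.I) * (z/r₀ * Complex.exp (-(t:ℂ)*Complex.I))
          = z * (r₀/r₀) * (Complex.exp ((t:ℂ)*Complex.I) * Complex.exp (-(t:ℂ)*Complex.I)) by ring]
      rw [he, div_self hr0]
      ring
    have habs1 : ‖1 - w * Complex.exp (-(t:ℂ) * Complex.I)‖ ≠ 0 := by
      rw [ne_eq, norm_eq_zero, sub_eq_zero]
      intro h
      have : ‖w * Complex.exp (-(t:ℂ) * Complex.I)‖ = 1 := by rw [← h]; simp
      have hle : ‖w * Complex.exp (-(t:ℂ) * Complex.I)‖ < 1 := by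
        rw [norm_mul, show -(t:ℂ) * Complex.I = ((-t:ℝ):ℂ) * Complex.I by push_cast; ring]
        simpa [Complex.norm_exp] using hw
      linarith [this, hle]
    rw [hfact, norm_mul, norm_mul, Complex.norm_of_nonneg hr₀.le,
      show ‖Complex.exp ((t:ℂ) * Complex.I)‖ = 1 from Complex.norm_exp_ofReal_mul_I t,
      mul_one,
      show ‖w * Complex.exp (-(t:ℂ) * Complex.I) - 1‖
        = ‖1 - w * Complex.exp (-(t:ℂ) * Complex.I)‖ by
          rw [← neg_sub, norm_neg]]
    rw [Real.log_mul hr₀.ne' habs1]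
    push_cast
    ring
  have hcont2 : Continuous (fun t : ℝ =>
      (Real.log ‖1 - w * Complex.exp (-(t:ℂ) * Complex.I)‖ : ℂ)
        * Complex.exp ((n:ℂ) * t * Complex.I)) := by
    apply Continuous.mul
    · apply Complex.continuous_ofReal.comp
      apply Continuous.log
      · exact continuous_norm.comp (by fun_prop)
      · intro t
        rw [ne_eq, norm_eq_zero, sub_eq_zero]
        intro h
        have h1 : ‖w * Complex.exp (-(t:ℂ) * Complex.I)‖ = 1 := by rw [← h]; simp
        have hle : ‖w * Complex.exp (-(t:ℂ) * Complex.I)‖ < 1 := by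
          rw [norm_mul, show -(t:ℂ) * Complex.I = ((-t:ℝ):ℂ) * Complex.I by push_cast; ring]
          simpa [Complex.norm_exp] using hw
        linarith
    · fun_prop
  have hsplit : (∫ t in (0 : ℝ)..(2 * Real.pi),
          (Real.log ‖z - (r₀ : ℂ) * Complex.exp ((t : ℂ) * Complex.I)‖ : ℂ) *
            Complex.exp ((n : ℂ) * (t : ℂ) * Complex.I))
      = (∫ t in (0 : ℝ)..(2 * Real.pi),
          (Real.log r₀ : ℂ) * Complex.exp ((n : ℂ) * (t : ℂ) * Complex.I))
        + ∫ t in (0 : ℝ)..(2 * Real.pi),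
          (Real.log ‖1 - w * Complex.exp (-(t:ℂ) * Complex.I)‖ : ℂ)
            * Complex.exp ((n : ℂ) * (t : ℂ) * Complex.I) := by
    rw [← intervalIntegral.integral_add (by apply Continuous.intervalIntegrable; fun_prop)
      (hcont2.intervalIntegrable _ _)]
    apply intervalIntegral.integral_congr
    intro t _
    dsimp only
    rw [hlog t, add_mul]
  have hI1 : (∫ t in (0 : ℝ)..(2 * Real.pi),
      (Real.log r₀ : ℂ) * Complex.exp ((n : ℂ) * (t : ℂ) * Complex.I)) = 0 := by
    rw [intervalIntegral.integral_const_mul,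
      show (fun t : ℝ => Complex.exp ((n : ℂ) * (t : ℂ) * Complex.I))
        = fun t : ℝ => Complex.exp (((n:ℤ) : ℂ) * (t : ℂ) * Complex.I) by push_cast; rfl,
      intExp, if_neg (by omega : (n:ℤ) ≠ 0), mul_zero]
  rw [hsplit, hI1, zero_add, part2 w hw n hn]
  have hπ : (Real.pi : ℂ) ≠ 0 := by exact_mod_cast Real.pi_ne_zero
  have hn0 : (n : ℂ) ≠ 0 := by exact_mod_cast (by omega : (n:ℕ) ≠ 0)
  have hzpow : (r₀ : ℂ) ^ ((1 : ℤ) - (n : ℤ)) = (r₀:ℂ) / (r₀:ℂ)^n := by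
    rw [zpow_sub₀ hr0, zpow_one, zpow_natCast, div_eq_mul_inv]
  rw [hzpow, hwdef, div_pow]
  field_simp

end Aux
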